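/- Let d ≥ 2, n ≥ 2, let ω : ℝ → ℝ^d be C^1, let k_2, …, k_n ∈ ℤ^{d−1} and let φ_2, …, φ_n : ℝ → ℝ be C^1, and define H_n(θ, r) = ⟨ω(r_d), r⟩ − Σ_{j=2}^n φ_j(r_d) sin(2π⟨k_j, θ̃⟩). Suppose s ∈ ℝ satisfies ⟨ω̃(s), k_n⟩ = 0, k_n ≠ 0, φ_n(s) ≠ 0, and ⟨ω̃(s), k_j⟩ ≠ 0 for 2 ≤ j ≤ n−1. Then the solution (θ(t), r(t)) of Hamilton's equations for H_n with initial condition θ(0) = 0, r(0) = (0, …, 0, s) is defined for all t and satisfies r̃(t) = 2π φ_n(s) t · k_n + B(t) with B : ℝ → ℝ^{d−1} bounded; in particular sup_{t>0} ‖r̃(t)‖ = ∞. -/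

import Mathlib

open Real Filter Set

noncomputable section

/-- The phase space `T^d × ℝ^d`, realized as pairs `(θ, r)` of functions `Fin d → ℝ`. -/
abbrev Phase (d : ℕ) := (Fin d → ℝ) × (Fin d → ℝ)

/-- `H` is `ℤ^d`-periodic in the angle variable `θ`. -/
def PeriodicTheta {d : ℕ} (H : Phase d → ℝ) : Prop :=
  ∀ (θ r : Fin d → ℝ) (m : Fin d → ℤ), H (fun i => θ i + (m i : ℝ), r) = H (θ, r)

/-- `H` is real entire: it is the restriction to `ℝ^d × ℝ^d` of a holomorphic
function on `ℂ^d × ℂ^d`. -/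
def RealEntire {d : ℕ} (H : Phase d → ℝ) : Prop :=
  ∃ F : (Fin d → ℂ) × (Fin d → ℂ) → ℂ, Differentiable ℂ F ∧
    ∀ θ r : Fin d → ℝ, F (fun i => (θ i : ℂ), fun i => (r i : ℂ)) = H (θ, r)

/-- `H` is of the form `(*)` with frequency `ω`:
`|H(θ,r) − ⟨ω,r⟩| ≤ C‖r‖²` for all `θ` and all `‖r‖ ≤ δ`. -/
def FormStar {d : ℕ} (H : Phase d → ℝ) (ω : Fin d → ℝ) : Prop :=
  ∃ C δ : ℝ, 0 < C ∧ 0 < δ ∧ ∀ θ r : Fin d → ℝ, ‖r‖ ≤ δ →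
    |H (θ, r) - ∑ i, ω i * r i| ≤ C * ‖r‖ ^ 2

/-- `(θ, r)` is a solution of Hamilton's equations for `H` on the set `J`:
`θ' = ∂H/∂r`, `r' = −∂H/∂θ`. -/
def IsSolutionOn {d : ℕ} (H : Phase d → ℝ) (θ r : ℝ → Fin d → ℝ) (J : Set ℝ) : Prop :=
  ∀ t ∈ J, ∀ i : Fin d,
    HasDerivWithinAt (fun u => θ u i) (fderiv ℝ H (θ t, r t) (0, Pi.single i 1)) J t ∧
    HasDerivWithinAt (fun u => r u i) (-(fderiv ℝ H (θ t, r t) (Pi.single i 1, 0))) J t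

/-- Embedding of the first `d − 1` indices into `Fin d`. -/
def emb (d : ℕ) : Fin (d - 1) → Fin d := Fin.castLE (Nat.sub_le d 1)

/-- The last index of `Fin d`. -/
def lst (d : ℕ) (hd : 0 < d) : Fin d := ⟨d - 1, Nat.sub_lt hd Nat.one_pos⟩

/-- `⟨ω̃(s), k_j⟩ = Σ_{i=1}^{d−1} ω_i(s) k_{j,i}`. -/
def Aj (d : ℕ) (ω : ℝ → Fin d → ℝ) (k : ℕ → Fin (d - 1) → ℤ) (j : ℕ) (s : ℝ) : ℝ :=
  ∑ i, ω s (emb d i) * (k j i : ℝ)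

/-- `H_n(θ, r) = ⟨ω(r_d), r⟩ − Σ_{j=2}^n φ_j(r_d) sin(2π⟨k_j, θ̃⟩)`. -/
def Hn (d n : ℕ) (hd : 0 < d) (ω : ℝ → Fin d → ℝ) (k : ℕ → Fin (d - 1) → ℤ)
    (φ : ℕ → ℝ → ℝ) (z : Phase d) : ℝ :=
  (∑ i, ω (z.2 (lst d hd)) i * z.2 i) -
    ∑ j ∈ Finset.Icc 2 n, φ j (z.2 (lst d hd)) *
      Real.sin (2 * π * ∑ i, (k j i : ℝ) * z.1 (emb d i))

/-- `H_0(θ, r) = ⟨ω(r_d), r⟩`. -/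
def H0 (d : ℕ) (hd : 0 < d) (ω : ℝ → Fin d → ℝ) (z : Phase d) : ℝ :=
  ∑ i, ω (z.2 (lst d hd)) i * z.2 i

/-- The map `Ψ_n(θ, r) = (θ̃, θ_d − (1/2π) Σ_j (d/ds)[φ_j(s)/⟨ω̃(s), k_j⟩] cos(2π⟨k_j, θ̃⟩),
r̃ − Σ_j (φ_j(s)/⟨ω̃(s), k_j⟩) sin(2π⟨k_j, θ̃⟩) k_j, s)`, with `s = r_d`. -/
def Psin (d n : ℕ) (hd : 0 < d) (ω : ℝ → Fin d → ℝ) (k : ℕ → Fin (d - 1) → ℤ)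
    (φ : ℕ → ℝ → ℝ) (z : Phase d) : Phase d :=
  (fun i => if i = lst d hd then
      z.1 (lst d hd) - (1 / (2 * π)) * ∑ j ∈ Finset.Icc 2 n,
        deriv (fun s => φ j s / Aj d ω k j s) (z.2 (lst d hd)) *
          Real.cos (2 * π * ∑ i', (k j i' : ℝ) * z.1 (emb d i'))
    else z.1 i,
   fun i => if h : (i : ℕ) < d - 1 then
      z.2 i - ∑ j ∈ Finset.Icc 2 n,
        (φ j (z.2 (lst d hd)) / Aj d ω k j (z.2 (lst d hd))) *
          Real.sin (2 * π * ∑ i', (k j i' : ℝ) * z.1 (emb d i')) * (k j ⟨i, h⟩ : ℝ)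
    else z.2 i)

namespace St18
open Finset ContinuousLinearMap

def Ev1 (d : ℕ) (i : Fin d) : Phase d →L[ℝ] ℝ :=
  (proj i).comp (fst ℝ (Fin d → ℝ) (Fin d → ℝ))
def Ev2 (d : ℕ) (i : Fin d) : Phase d →L[ℝ] ℝ :=
  (proj i).comp (snd ℝ (Fin d → ℝ) (Fin d → ℝ))

@[simp] lemma Ev1_apply (d : ℕ) (i : Fin d) (z : Phase d) : Ev1 d i z = z.1 i := rfl
@[simp] lemma Ev2_apply (d : ℕ) (i : Fin d) (z : Phase d) : Ev2 d i z = z.2 i := rfl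

def Kj (d : ℕ) (k : ℕ → Fin (d - 1) → ℤ) (j : ℕ) : Phase d →L[ℝ] ℝ :=
  ∑ i, ((2 * π) * (k j i : ℝ)) • Ev1 d (emb d i)

lemma Kj_apply {d : ℕ} (k : ℕ → Fin (d - 1) → ℤ) (j : ℕ) (z : Phase d) :
    Kj d k j z = 2 * π * ∑ i, (k j i : ℝ) * z.1 (emb d i) := by
  simp [Kj, Finset.mul_sum, mul_assoc]

def Dn (d n : ℕ) (hd : 0 < d) (ω : ℝ → Fin d → ℝ) (k : ℕ → Fin (d - 1) → ℤ)
    (φ : ℕ → ℝ → ℝ) (z : Phase d) : Phase d →L[ℝ] ℝ :=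
  (∑ i, (ω (z.2 (lst d hd)) i • Ev2 d i +
      z.2 i • (deriv (fun s => ω s i) (z.2 (lst d hd)) • Ev2 d (lst d hd)))) -
  ∑ j ∈ Finset.Icc 2 n,
    (φ j (z.2 (lst d hd)) • (Real.cos (Kj d k j z) • Kj d k j) +
      Real.sin (Kj d k j z) • (deriv (φ j) (z.2 (lst d hd)) • Ev2 d (lst d hd)))

lemma hasFDerivAt_Hn (d n : ℕ) (hd : 0 < d) (ω : ℝ → Fin d → ℝ) (hω : ContDiff ℝ 1 ω)
    (k : ℕ → Fin (d - 1) → ℤ) (φ : ℕ → ℝ → ℝ)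
    (hφ : ∀ j ∈ Finset.Icc 2 n, ContDiff ℝ 1 (φ j)) (z : Phase d) :
    HasFDerivAt (Hn d n hd ω k φ) (Dn d n hd ω k φ z) z := by
  have hω' : ∀ i, Differentiable ℝ (fun s => ω s i) :=
    differentiable_pi.mp (hω.differentiable one_ne_zero)
  have key : HasFDerivAt (fun z : Phase d =>
      (∑ i, ω (z.2 (lst d hd)) i * z.2 i) -
        ∑ j ∈ Finset.Icc 2 n, φ j (z.2 (lst d hd)) * Real.sin (Kj d k j z))
      (Dn d n hd ω k φ z) z := by
    apply HasFDerivAt.sub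
    · exact HasFDerivAt.fun_sum fun (i : Fin d) _ =>
        (((hω' i (Ev2 d (lst d hd) z)).hasDerivAt.comp_hasFDerivAt z
          (Ev2 d (lst d hd)).hasFDerivAt).mul (Ev2 d i).hasFDerivAt :
          HasFDerivAt (fun z : Phase d => ω (z.2 (lst d hd)) i * z.2 i) _ z)
    · exact HasFDerivAt.fun_sum fun j hj =>
        ((((hφ j hj).differentiable one_ne_zero (z.2 (lst d hd))).hasDerivAt.comp_hasFDerivAt z
          (Ev2 d (lst d hd)).hasFDerivAt).mul
          ((Real.hasDerivAt_sin (Kj d k j z)).comp_hasFDerivAt z (Kj d k j).hasFDerivAt))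
  have : (Hn d n hd ω k φ) = (fun z : Phase d =>
      (∑ i, ω (z.2 (lst d hd)) i * z.2 i) -
        ∑ j ∈ Finset.Icc 2 n, φ j (z.2 (lst d hd)) * Real.sin (Kj d k j z)) := by
    funext z; simp only [Hn, Kj_apply]
  rw [this]
  exact key

lemma Dn_apply (d n : ℕ) (hd : 0 < d) (ω : ℝ → Fin d → ℝ) (k : ℕ → Fin (d - 1) → ℤ)
    (φ : ℕ → ℝ → ℝ) (z : Phase d) (v : Phase d) :
    Dn d n hd ω k φ z v =
      (∑ i, (ω (z.2 (lst d hd)) i * v.2 i +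
        z.2 i * (deriv (fun s => ω s i) (z.2 (lst d hd)) * v.2 (lst d hd)))) -
      ∑ j ∈ Finset.Icc 2 n,
        (φ j (z.2 (lst d hd)) * (Real.cos (Kj d k j z) * Kj d k j v) +
          Real.sin (Kj d k j z) * (deriv (φ j) (z.2 (lst d hd)) * v.2 (lst d hd))) := by
  simp [Dn, ContinuousLinearMap.sum_apply, smul_eq_mul, mul_assoc]

lemma ftc (F : ℝ → ℝ) (hF : Continuous F) (t : ℝ) :
    HasDerivAt (fun u => ∫ x in (0:ℝ)..u, F x) (F t) t :=
  intervalIntegral.integral_hasDerivAt_right (hF.intervalIntegrable _ _)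
    (hF.stronglyMeasurableAtFilter _ _) hF.continuousAt

end St18

/-- Suppose `⟨ω̃(s), k_n⟩ = 0` with `k_n ≠ 0`, `φ_n(s) ≠ 0`, and
`⟨ω̃(s), k_j⟩ ≠ 0` for `2 ≤ j ≤ n − 1`. Then the solution of Hamilton's equations
for `H_n` with initial condition `θ(0) = 0`, `r(0) = (0, …, 0, s)` is defined for all
`t` and satisfies `r̃(t) = 2π φ_n(s) t k_n + B(t)` with `B` bounded; in particular
`sup_{t>0} ‖r̃(t)‖ = ∞`. -/
theorem statement18 (d n : ℕ) (hd : 2 ≤ d) (hn : 2 ≤ n)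
    (ω : ℝ → Fin d → ℝ) (hω : ContDiff ℝ 1 ω)
    (k : ℕ → Fin (d - 1) → ℤ)
    (φ : ℕ → ℝ → ℝ) (hφ : ∀ j ∈ Finset.Icc 2 n, ContDiff ℝ 1 (φ j))
    (s : ℝ) (hkn : k n ≠ 0) (hφn : φ n s ≠ 0)
    (hAn : Aj d ω k n s = 0)
    (hAj : ∀ j ∈ Finset.Icc 2 (n - 1), Aj d ω k j s ≠ 0) :
    ∃ (θ r : ℝ → Fin d → ℝ) (B : ℝ → Fin (d - 1) → ℝ),
      IsSolutionOn (Hn d n (by omega) ω k φ) θ r Set.univ ∧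
      θ 0 = 0 ∧
      r 0 = (fun i => if i = lst d (by omega) then s else 0) ∧
      (∃ M : ℝ, ∀ t : ℝ, ‖B t‖ ≤ M) ∧
      (∀ t : ℝ, ∀ i : Fin (d - 1),
        r t (emb d i) = 2 * π * φ n s * t * (k n i : ℝ) + B t i) ∧
      (∀ M : ℝ, ∃ t : ℝ, 0 < t ∧ M < ‖fun i : Fin (d - 1) => r t (emb d i)‖) := by
    open St18 in
  classical
  have hd0 : 0 < d := by omega
  set L : Fin d := lst d hd0 with hL
  set A : ℕ → ℝ := fun j => Aj d ω k j s with hA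
  set g : ℕ → ℝ → ℝ := fun j t =>
    if A j = 0 then t else Real.sin (2*π*A j*t)/(2*π*A j) with hgdef
  have h2pi : (2*π) ≠ 0 := by positivity
  have hg : ∀ j t, HasDerivAt (g j) (Real.cos (2*π*A j*t)) t := by
    intro j t
    by_cases h : A j = 0
    · simpa [hgdef, h] using (hasDerivAt_id' t)
    · have hc : (2*π*A j) ≠ 0 := mul_ne_zero h2pi h
      have h1 : HasDerivAt (fun t => Real.sin (2*π*A j*t))
          (Real.cos (2*π*A j*t) * (2*π*A j*1)) t :=
        (Real.hasDerivAt_sin _).comp t ((hasDerivAt_id t).const_mul (2*π*A j))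
      have h2 := h1.div_const (2*π*A j)
      have : Real.cos (2*π*A j*t) * (2*π*A j*1) / (2*π*A j) = Real.cos (2*π*A j*t) := by
        field_simp
      rw [this] at h2
      have hgj : g j = fun x => Real.sin (2*π*A j*x)/(2*π*A j) := by
        funext x; simp [hgdef, h]
      rw [hgj]; exact h2
  have gcont : ∀ j, Continuous (g j) := fun j =>
    continuous_iff_continuousAt.mpr fun t => (hg j t).continuousAt
  have g0 : ∀ j, g j 0 = 0 := by
    intro j; by_cases h : A j = 0 <;> simp [hgdef, h]
  have gbound : ∀ j, A j ≠ 0 → ∀ t, |g j t| ≤ |1/(2*π*A j)| := by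
    intro j h t
    simp only [hgdef, if_neg h]
    have hc : (2*π*A j) ≠ 0 := mul_ne_zero h2pi h
    rw [abs_div, abs_div, abs_one]
    gcongr
    · exact abs_le.mpr ⟨Real.neg_one_le_sin _, Real.sin_le_one _⟩
  -- the solution
  set rf : ℝ → Fin d → ℝ := fun t i =>
    if h : (i : ℕ) < d - 1 then
      ∑ j ∈ Finset.Icc 2 n, 2*π*φ j s*(k j ⟨i, h⟩ : ℝ)*g j t
    else s with hrf
  have hLv : (L : ℕ) = d - 1 := rfl
  have hrfL : ∀ t, rf t L = s := by
    intro t; simp only [hrf]; rw [dif_neg]; omega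
  have hrfc : ∀ i, Continuous fun t => rf t i := by
    intro i
    by_cases h : (i : ℕ) < d - 1
    · simp only [hrf, dif_pos h]
      exact continuous_finset_sum _ fun j _ => continuous_const.mul (gcont j)
    · simp only [hrf, dif_neg h]; exact continuous_const
  set F : ℝ → ℝ := fun u =>
    ω s L + (∑ i, rf u i * deriv (fun s' => ω s' i) s)
      - ∑ j ∈ Finset.Icc 2 n, Real.sin (2*π*A j*u) * deriv (φ j) s with hF
  have hFc : Continuous F := by
    apply Continuous.sub
    · exact continuous_const.add
        (continuous_finset_sum _ fun i _ => (hrfc i).mul continuous_const)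
    · apply continuous_finset_sum _ fun j _ => Continuous.mul ?_ continuous_const
      exact Real.continuous_sin.comp (continuous_const.mul continuous_id)
  set θf : ℝ → Fin d → ℝ := fun t i =>
    if i = L then ∫ u in (0:ℝ)..t, F u else ω s i * t with hθf
  have hembne : ∀ i : Fin (d-1), emb d i ≠ L := by
    intro i hi
    have : ((emb d i : Fin d) : ℕ) = (i : ℕ) := rfl
    have h2 := i.isLt
    rw [hi] at this
    omega
  have hθe : ∀ t (i : Fin (d-1)), θf t (emb d i) = ω s (emb d i) * t := by
    intro t i; simp only [hθf, if_neg (hembne i)]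
  have hKz : ∀ j t, Kj d k j (θf t, rf t) = 2*π*A j*t := by
    intro j t
    rw [Kj_apply]
    have : ∀ i ∈ Finset.univ, (k j i : ℝ) * (θf t, rf t).1 (emb d i)
        = (ω s (emb d i) * (k j i : ℝ)) * t := by
      intro i _
      show (k j i : ℝ) * θf t (emb d i) = _
      rw [hθe t i]; ring
    rw [Finset.sum_congr rfl this, ← Finset.sum_mul, hA]
    simp only [Aj]; ring
  have hK0 : ∀ j (v : Fin d → ℝ), Kj d k j (0, v) = 0 := by
    intro j v; rw [Kj_apply]; simp
  have hsol : IsSolutionOn (Hn d n hd0 ω k φ) θf rf Set.univ := by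
    intro t _ i
    have hfd : fderiv ℝ (Hn d n hd0 ω k φ) (θf t, rf t) = Dn d n hd0 ω k φ (θf t, rf t) :=
      (hasFDerivAt_Hn d n hd0 ω hω k φ hφ (θf t, rf t)).fderiv
    constructor
    · rw [hasDerivWithinAt_univ, hfd, Dn_apply]
      by_cases hiL : i = L
      · subst hiL
        have hfun : (fun u => θf u L) = fun u => ∫ x in (0:ℝ)..u, F x := by
          funext u; simp [hθf]
        rw [hfun]
        refine HasDerivAt.congr_deriv (ftc F hFc t) (Eq.symm ?_)
        show _ = F t
        simp only [hF, hrfL, hKz, hK0, Pi.single_eq_same, mul_one, mul_zero, zero_add,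
          Finset.sum_add_distrib, Pi.single_apply, mul_ite, mul_zero, mul_one]
        simp [← hL, hrfL]
      · have h1 : (fun u => θf u i) = fun u => ω s i * u := by
          funext u; simp [hθf, hiL]
        rw [h1]
        have hLne : L ≠ i := Ne.symm hiL
        refine HasDerivAt.congr_deriv ((hasDerivAt_id t).const_mul (ω s i)) (Eq.symm ?_)
        simp [← hL, hrfL, hK0, Pi.single_apply, mul_ite, hLne, Finset.sum_ite_eq']
    · rw [hasDerivWithinAt_univ, hfd, Dn_apply]
      by_cases hiL : i = L
      · subst hiL
        have h1 : (fun u => rf u L) = fun _ => s := by funext u; exact hrfL u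
        rw [h1]
        have hz : ∀ j, Kj d k j (Pi.single L (1:ℝ), 0) = 0 := by
          intro j; rw [Kj_apply]
          have hs1 : ∀ i' : Fin (d-1), (Pi.single L (1:ℝ) : Fin d → ℝ) (emb d i') = 0 :=
            fun i' => by simp [Pi.single_apply, hembne i']
          simp [hs1]
        convert hasDerivAt_const t s using 1
        simp [hz, hrfL]
      · have hne : (i:ℕ) ≠ d - 1 := fun h => hiL (Fin.ext (by rw [h]; rfl))
        have hv : (i:ℕ) < d - 1 := by have := i.isLt; omega
        set i₀ : Fin (d-1) := ⟨i, hv⟩ with hi₀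
        have hemb : emb d i₀ = i := rfl
        have hsingle : ∀ j, Kj d k j (Pi.single i (1:ℝ), 0) = 2*π*(k j i₀ : ℝ) := by
          intro j; rw [Kj_apply]
          have hterm : ∀ i' ∈ Finset.univ,
              (k j i' : ℝ) * ((Pi.single i (1:ℝ) : Fin d → ℝ), (0 : Fin d → ℝ)).1 (emb d i')
              = if i' = i₀ then (k j i' : ℝ) else 0 := by
            intro i' _
            show (k j i' : ℝ) * (Pi.single i (1:ℝ) : Fin d → ℝ) (emb d i') = _
            by_cases h : i' = i₀
            · subst h; rw [hemb, if_pos rfl, Pi.single_eq_same, mul_one]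
            · rw [Pi.single_eq_of_ne, mul_zero, if_neg h]
              exact fun hc => h (Fin.ext (by simpa [emb, Fin.ext_iff] using hc))
          rw [Finset.sum_congr rfl hterm, Finset.sum_ite_eq' Finset.univ i₀
            (fun i' => (k j i' : ℝ))]
          simp
        have hfun : (fun u => rf u i) =
            fun u => ∑ j ∈ Finset.Icc 2 n, 2*π*φ j s*(k j i₀:ℝ)*g j u := by
          funext u; simp only [hrf]; rw [dif_pos hv]
        rw [hfun]
        have hd' : HasDerivAt (fun u => ∑ j ∈ Finset.Icc 2 n, 2*π*φ j s*(k j i₀:ℝ)*g j u)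
            (∑ j ∈ Finset.Icc 2 n, 2*π*φ j s*(k j i₀:ℝ)*Real.cos (2*π*A j*t)) t :=
          HasDerivAt.fun_sum fun j _ => (hg j t).const_mul (2*π*φ j s*(k j i₀:ℝ))
        refine HasDerivAt.congr_deriv hd' (Eq.symm ?_)
        simp only [← hL, hrfL, hKz, hsingle, Prod.snd, Pi.zero_apply, mul_zero, add_zero,
          zero_add, Finset.sum_const_zero, zero_sub, neg_neg, mul_one]
        exact Finset.sum_congr rfl fun j _ => by ring
  -- the bounded part B
  set B : ℝ → Fin (d-1) → ℝ :=
    fun t i => ∑ j ∈ Finset.Icc 2 (n-1), 2*π*φ j s*(k j i : ℝ)*g j t with hB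
  have hsplit : ∀ f : ℕ → ℝ,
      ∑ j ∈ Finset.Icc 2 n, f j = (∑ j ∈ Finset.Icc 2 (n-1), f j) + f n := by
    intro f
    conv_lhs => rw [show n = (n-1)+1 from by omega]
    rw [Finset.sum_Icc_succ_top (by omega : 2 ≤ (n-1)+1), show (n-1)+1 = n from by omega]
  have hgn : ∀ t, g n t = t := by
    intro t
    have hAn' : A n = 0 := hAn
    simp [hgdef, hAn']
  have hr_eq : ∀ t (i : Fin (d-1)),
      rf t (emb d i) = 2*π*φ n s*t*(k n i:ℝ) + B t i := by
    intro t i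
    have hlt : ((emb d i : Fin d) : ℕ) < d - 1 := i.isLt
    simp only [hrf]
    rw [dif_pos hlt]
    simp only [show (⟨((emb d i : Fin d) : ℕ), hlt⟩ : Fin (d-1)) = i from rfl]
    rw [hsplit fun j => 2*π*φ j s*(k j i : ℝ)*g j t, hgn t, hB]
    ring
  have hMB : ∃ M, ∀ t, ‖B t‖ ≤ M := by
    refine ⟨∑ j ∈ Finset.Icc 2 (n-1), |2*π*φ j s| * (∑ i, |(k j i : ℝ)|) * |1/(2*π*A j)|, ?_⟩
    intro t
    rw [pi_norm_le_iff_of_nonneg (by positivity)]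
    intro i
    rw [Real.norm_eq_abs]
    calc |B t i| ≤ ∑ j ∈ Finset.Icc 2 (n-1), |2*π*φ j s*(k j i:ℝ)*g j t| :=
          Finset.abs_sum_le_sum_abs _ _
    _ ≤ ∑ j ∈ Finset.Icc 2 (n-1), |2*π*φ j s| * (∑ i', |(k j i':ℝ)|) * |1/(2*π*A j)| := by
        apply Finset.sum_le_sum; intro j hj
        rw [abs_mul, abs_mul]
        have h1 : |(k j i:ℝ)| ≤ ∑ i', |(k j i':ℝ)| :=
          Finset.single_le_sum (f := fun i' => |(k j i' : ℝ)|)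
            (fun _ _ => abs_nonneg _) (Finset.mem_univ i)
        have h2 := gbound j (hAj j hj) t
        gcongr
  obtain ⟨M0, hM0⟩ := hMB
  set M1 := max M0 0 with hM1def
  have hM1 : ∀ t, ‖B t‖ ≤ M1 := fun t => (hM0 t).trans (le_max_left _ _)
  have hM1nn : 0 ≤ M1 := le_max_right _ _
  -- initial conditions
  have hθ0 : θf 0 = 0 := by
    funext i
    by_cases h : i = L <;> simp [hθf, h, intervalIntegral.integral_same]
  have hr0 : rf 0 = (fun i => if i = lst d hd0 then s else 0) := by
    funext i
    by_cases h : (i:ℕ) < d - 1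
    · have hiL : ¬ i = lst d hd0 := by
        intro hh
        have : (i : ℕ) = d - 1 := congrArg Fin.val hh
        omega
      simp only [hrf]
      rw [dif_pos h, if_neg hiL]
      simp [g0]
    · have hiL : i = lst d hd0 := by
        apply Fin.ext
        have := i.isLt
        show (i : ℕ) = d - 1
        omega
      simp only [hrf]
      rw [dif_neg h, if_pos hiL]
  -- unboundedness
  have hgrow : ∀ M : ℝ, ∃ t : ℝ, 0 < t ∧ M < ‖fun i : Fin (d - 1) => rf t (emb d i)‖ := by
    intro M
    obtain ⟨i₀, hi₀⟩ : ∃ i₀, k n i₀ ≠ 0 := by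
      by_contra h; push_neg at h; exact hkn (funext h)
    have hk1 : (1:ℝ) ≤ |(k n i₀ : ℝ)| := by
      rw [← Int.cast_abs]; exact_mod_cast Int.one_le_abs hi₀
    have hφpos : 0 < |φ n s| := abs_pos.mpr hφn
    set c : ℝ := 2*π*|φ n s| * |(k n i₀:ℝ)| with hc
    have hcpos : 0 < c := by
      have h0 : (0:ℝ) < 2*π*|φ n s| := by positivity
      exact mul_pos h0 (by linarith)
    refine ⟨(|M| + M1 + 1)/c, by positivity, ?_⟩
    set t := (|M| + M1 + 1)/c with htdef
    have htpos : 0 < t := by positivity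
    have hct : c * t = |M| + M1 + 1 := by
      rw [htdef, mul_div_cancel₀ _ (ne_of_gt hcpos)]
    have hBi : |B t i₀| ≤ M1 := by
      have := norm_le_pi_norm (B t) i₀
      rw [Real.norm_eq_abs] at this
      exact this.trans (hM1 t)
    have habs : |2*π*φ n s*t*(k n i₀:ℝ)| = c * t := by
      rw [abs_mul, abs_mul, abs_mul, abs_of_pos htpos,
        abs_of_nonneg (by positivity : (0:ℝ) ≤ 2*π)]
      ring
    have h1 : |M| + 1 ≤ |rf t (emb d i₀)| := by
      rw [hr_eq t i₀]
      have htr : |2*π*φ n s*t*(k n i₀:ℝ)|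
          ≤ |2*π*φ n s*t*(k n i₀:ℝ) + B t i₀| + |B t i₀| := by
        have := abs_add_le (2*π*φ n s*t*(k n i₀:ℝ) + B t i₀) (-(B t i₀))
        simpa using this
      rw [habs] at htr
      linarith
    have h2 := norm_le_pi_norm (fun i : Fin (d-1) => rf t (emb d i)) i₀
    rw [Real.norm_eq_abs] at h2
    have := le_abs_self M
    linarith
  exact ⟨θf, rf, B, hsol, hθ0, hr0, ⟨M1, hM1⟩, hr_eq, hgrow⟩
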